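/- Let char F ≠ 2 and Q as above. If a₁, a₂, a₃, a₄ all lie in span{u₁, u₂, u₃} or all lie in span{v₁, v₂, v₃}, then Q(a₁,a₂,a₃,a₄) = 0. Also Q(e₁, e₂, u_i, v_j) = −δ_{ij}. -/

import Mathlib

open Matrix

/-- The Zorn vector-matrix algebra: elements `(α, u; v, β)` with `α β : F`, `u v : F³`. -/
def Zorn (F : Type*) : Type _ := F × F × (Fin 3 → F) × (Fin 3 → F)

namespace Zorn

variable {F : Type*} [Field F]

/-- Build a Zorn matrix from its four components. -/
def mk (a b : F) (u v : Fin 3 → F) : Zorn F := (a, b, u, v)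

/-- The upper-left scalar entry `α`. -/
def al (x : Zorn F) : F := x.1
/-- The lower-right scalar entry `β`. -/
def be (x : Zorn F) : F := x.2.1
/-- The upper-right vector entry `u`. -/
def up (x : Zorn F) : Fin 3 → F := x.2.2.1
/-- The lower-left vector entry `v`. -/
def lo (x : Zorn F) : Fin 3 → F := x.2.2.2

instance : AddCommGroup (Zorn F) :=
  inferInstanceAs (AddCommGroup (F × F × (Fin 3 → F) × (Fin 3 → F)))

instance : Module F (Zorn F) :=
  inferInstanceAs (Module F (F × F × (Fin 3 → F) × (Fin 3 → F)))

/-- Zorn vector-matrix multiplication. -/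
instance : Mul (Zorn F) :=
  ⟨fun x y => mk (x.al * y.al + x.up ⬝ᵥ y.lo)
      (x.be * y.be + x.lo ⬝ᵥ y.up)
      (x.al • y.up + y.be • x.up - crossProduct x.lo y.lo)
      (y.al • x.lo + x.be • y.lo + crossProduct x.up y.up)⟩

instance : One (Zorn F) := ⟨mk 1 1 0 0⟩

/-- The standard conjugation (involution) of the Zorn algebra. -/
def conj (x : Zorn F) : Zorn F := mk x.be x.al (-x.up) (-x.lo)

/-- The trace `t(a) = α + β` (the scalar such that `a + conj a = t a • 1`). -/
def t (x : Zorn F) : F := x.al + x.be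

/-- The norm `n(a) = αβ - u·v` (the scalar such that `a * conj a = n a • 1`). -/
def n (x : Zorn F) : F := x.al * x.be - x.up ⬝ᵥ x.lo

/-- The idempotent `e₁`. -/
def e₁ : Zorn F := mk 1 0 0 0
/-- The idempotent `e₂`. -/
def e₂ : Zorn F := mk 0 1 0 0
/-- The basis element `u_i`. -/
def U (i : Fin 3) : Zorn F := mk 0 0 (Pi.single i 1) 0
/-- The basis element `v_i`. -/
def V (i : Fin 3) : Zorn F := mk 0 0 0 (Pi.single i 1)

/-- An (algebra) automorphism of the Zorn algebra: a bijective `F`-linear,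
multiplicative, unital self-map. -/
def IsAut (g : Zorn F → Zorn F) : Prop :=
  Function.Bijective g ∧ (∀ x y : Zorn F, g (x + y) = g x + g y) ∧
    (∀ (c : F) (x : Zorn F), g (c • x) = c • g x) ∧
    (∀ x y : Zorn F, g (x * y) = g x * g y) ∧ g 1 = 1

end Zorn

open Zorn

/-- `M(z₁,z₂) = ½(z₁z₂ − z₂z₁) + t(z₁)z₂ − t(z₂)z₁`. -/
def M {F : Type*} [Field F] (z₁ z₂ : Zorn F) : Zorn F :=
  (2 : F)⁻¹ • (z₁ * z₂ - z₂ * z₁) + Zorn.t z₁ • z₂ - Zorn.t z₂ • z₁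

/-- `F(z₁,z₂,z₃,z₄) = t(M(z₁,z₂)·M(z₃,z₄))`. -/
def Fq {F : Type*} [Field F] (z₁ z₂ z₃ z₄ : Zorn F) : F :=
  Zorn.t (M z₁ z₂ * M z₃ z₄)

/-- `Q`, the complete skew symmetrization of `F(z₁,z₂,z₃,z₄)`. -/
def Q {F : Type*} [Field F] (z₁ z₂ z₃ z₄ : Zorn F) : F :=
  (6 : F)⁻¹ * (Fq z₁ z₂ z₃ z₄ - Fq z₃ z₂ z₁ z₄ - Fq z₄ z₂ z₃ z₁ - Fq z₁ z₄ z₃ z₂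
    - Fq z₁ z₃ z₂ z₄ - Fq z₃ z₄ z₂ z₁)

set_option linter.unusedSectionVars false

namespace Zorn
variable {F : Type*} [Field F]

@[simp] lemma al_mk (a b : F) (u v : Fin 3 → F) : (mk a b u v).al = a := rfl
@[simp] lemma be_mk (a b : F) (u v : Fin 3 → F) : (mk a b u v).be = b := rfl
@[simp] lemma up_mk (a b : F) (u v : Fin 3 → F) : (mk a b u v).up = u := rfl
@[simp] lemma lo_mk (a b : F) (u v : Fin 3 → F) : (mk a b u v).lo = v := rfl

lemma al_mul (x y : Zorn F) : (x * y).al = x.al * y.al + x.up ⬝ᵥ y.lo := rfl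
lemma be_mul (x y : Zorn F) : (x * y).be = x.be * y.be + x.lo ⬝ᵥ y.up := rfl
lemma up_mul (x y : Zorn F) : (x * y).up = x.al • y.up + y.be • x.up - crossProduct x.lo y.lo := rfl
lemma lo_mul (x y : Zorn F) : (x * y).lo = y.al • x.lo + x.be • y.lo + crossProduct x.up y.up := rfl
lemma al_add (x y : Zorn F) : (x + y).al = x.al + y.al := rfl
lemma be_add (x y : Zorn F) : (x + y).be = x.be + y.be := rfl
lemma up_add (x y : Zorn F) : (x + y).up = x.up + y.up := rfl
lemma lo_add (x y : Zorn F) : (x + y).lo = x.lo + y.lo := rfl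
lemma al_sub (x y : Zorn F) : (x - y).al = x.al - y.al := rfl
lemma be_sub (x y : Zorn F) : (x - y).be = x.be - y.be := rfl
lemma up_sub (x y : Zorn F) : (x - y).up = x.up - y.up := rfl
lemma lo_sub (x y : Zorn F) : (x - y).lo = x.lo - y.lo := rfl
lemma al_smul (c : F) (x : Zorn F) : (c • x).al = c * x.al := rfl
lemma be_smul (c : F) (x : Zorn F) : (c • x).be = c * x.be := rfl
lemma up_smul (c : F) (x : Zorn F) : (c • x).up = c • x.up := rfl
lemma lo_smul (c : F) (x : Zorn F) : (c • x).lo = c • x.lo := rfl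
@[simp] lemma al_zero : (0 : Zorn F).al = 0 := rfl
@[simp] lemma be_zero : (0 : Zorn F).be = 0 := rfl
@[simp] lemma up_zero : (0 : Zorn F).up = 0 := rfl
@[simp] lemma lo_zero : (0 : Zorn F).lo = 0 := rfl

/-- Membership in span of the `U`s forces the `al`, `be`, `lo` components to vanish. -/
lemma mem_spanU {x : Zorn F} (h : x ∈ Submodule.span F (Set.range (U : Fin 3 → Zorn F))) :
    x.al = 0 ∧ x.be = 0 ∧ x.lo = 0 := by
  induction h using Submodule.span_induction with
  | mem x hx => obtain ⟨i, rfl⟩ := hx; exact ⟨rfl, rfl, rfl⟩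
  | zero => exact ⟨rfl, rfl, rfl⟩
  | add x y _ _ hx hy =>
      exact ⟨by rw [al_add, hx.1, hy.1, add_zero], by rw [be_add, hx.2.1, hy.2.1, add_zero],
        by rw [lo_add, hx.2.2, hy.2.2, add_zero]⟩
  | smul c x _ hx =>
      exact ⟨by rw [al_smul, hx.1, mul_zero], by rw [be_smul, hx.2.1, mul_zero],
        by rw [lo_smul, hx.2.2, smul_zero]⟩

/-- Membership in span of the `V`s forces the `al`, `be`, `up` components to vanish. -/
lemma mem_spanV {x : Zorn F} (h : x ∈ Submodule.span F (Set.range (V : Fin 3 → Zorn F))) :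
    x.al = 0 ∧ x.be = 0 ∧ x.up = 0 := by
  induction h using Submodule.span_induction with
  | mem x hx => obtain ⟨i, rfl⟩ := hx; exact ⟨rfl, rfl, rfl⟩
  | zero => exact ⟨rfl, rfl, rfl⟩
  | add x y _ _ hx hy =>
      exact ⟨by rw [al_add, hx.1, hy.1, add_zero], by rw [be_add, hx.2.1, hy.2.1, add_zero],
        by rw [up_add, hx.2.2, hy.2.2, add_zero]⟩
  | smul c x _ hx =>
      exact ⟨by rw [al_smul, hx.1, mul_zero], by rw [be_smul, hx.2.1, mul_zero],
        by rw [up_smul, hx.2.2, smul_zero]⟩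

end Zorn

open Zorn in
lemma FqU_zero {F : Type*} [Field F] {a b c d : Zorn F}
    (ha : a.al = 0 ∧ a.be = 0 ∧ a.lo = 0) (hb : b.al = 0 ∧ b.be = 0 ∧ b.lo = 0)
    (hc : c.al = 0 ∧ c.be = 0 ∧ c.lo = 0) (hd : d.al = 0 ∧ d.be = 0 ∧ d.lo = 0) :
    Fq a b c d = 0 := by
  obtain ⟨ha1, ha2, ha3⟩ := ha
  obtain ⟨hb1, hb2, hb3⟩ := hb
  obtain ⟨hc1, hc2, hc3⟩ := hc
  obtain ⟨hd1, hd2, hd3⟩ := hd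
  have hab : (M a b).al = 0 ∧ (M a b).be = 0 ∧ (M a b).up = 0 := by
    refine ⟨?_, ?_, ?_⟩ <;>
      simp [M, Zorn.t, al_add, al_sub, al_smul, al_mul, be_add, be_sub, be_smul, be_mul,
        up_add, up_sub, up_smul, up_mul, ha1, ha2, ha3, hb1, hb2, hb3]
  have hcd : (M c d).al = 0 ∧ (M c d).be = 0 ∧ (M c d).up = 0 := by
    refine ⟨?_, ?_, ?_⟩ <;>
      simp [M, Zorn.t, al_add, al_sub, al_smul, al_mul, be_add, be_sub, be_smul, be_mul,
        up_add, up_sub, up_smul, up_mul, hc1, hc2, hc3, hd1, hd2, hd3]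
  simp [Fq, Zorn.t, al_mul, be_mul, hab.1, hab.2.1, hab.2.2, hcd.1, hcd.2.1, hcd.2.2]

open Zorn in
lemma FqV_zero {F : Type*} [Field F] {a b c d : Zorn F}
    (ha : a.al = 0 ∧ a.be = 0 ∧ a.up = 0) (hb : b.al = 0 ∧ b.be = 0 ∧ b.up = 0)
    (hc : c.al = 0 ∧ c.be = 0 ∧ c.up = 0) (hd : d.al = 0 ∧ d.be = 0 ∧ d.up = 0) :
    Fq a b c d = 0 := by
  obtain ⟨ha1, ha2, ha3⟩ := ha
  obtain ⟨hb1, hb2, hb3⟩ := hb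
  obtain ⟨hc1, hc2, hc3⟩ := hc
  obtain ⟨hd1, hd2, hd3⟩ := hd
  have hab : (M a b).al = 0 ∧ (M a b).be = 0 ∧ (M a b).lo = 0 := by
    refine ⟨?_, ?_, ?_⟩ <;>
      simp [M, Zorn.t, al_add, al_sub, al_smul, al_mul, be_add, be_sub, be_smul, be_mul,
        lo_add, lo_sub, lo_smul, lo_mul, ha1, ha2, ha3, hb1, hb2, hb3]
  have hcd : (M c d).al = 0 ∧ (M c d).be = 0 ∧ (M c d).lo = 0 := by
    refine ⟨?_, ?_, ?_⟩ <;>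
      simp [M, Zorn.t, al_add, al_sub, al_smul, al_mul, be_add, be_sub, be_smul, be_mul,
        lo_add, lo_sub, lo_smul, lo_mul, hc1, hc2, hc3, hd1, hd2, hd3]
  simp [Fq, Zorn.t, al_mul, be_mul, hab.1, hab.2.1, hab.2.2, hcd.1, hcd.2.1, hcd.2.2]

set_option maxHeartbeats 1000000 in
/-- `Q` vanishes when all four arguments lie in `span{u₁,u₂,u₃}` or all in
`span{v₁,v₂,v₃}`; and `Q(e₁, e₂, u_i, v_j) = −δ_{ij}`. -/
theorem zorn_Q_vanishing {F : Type*} [Field F] (h2 : (2 : F) ≠ 0) (h3 : (3 : F) ≠ 0) :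
    (∀ a₁ a₂ a₃ a₄ : Zorn F,
      a₁ ∈ Submodule.span F (Set.range (U : Fin 3 → Zorn F)) →
      a₂ ∈ Submodule.span F (Set.range (U : Fin 3 → Zorn F)) →
      a₃ ∈ Submodule.span F (Set.range (U : Fin 3 → Zorn F)) →
      a₄ ∈ Submodule.span F (Set.range (U : Fin 3 → Zorn F)) →
      Q a₁ a₂ a₃ a₄ = 0) ∧
    (∀ a₁ a₂ a₃ a₄ : Zorn F,
      a₁ ∈ Submodule.span F (Set.range (V : Fin 3 → Zorn F)) →
      a₂ ∈ Submodule.span F (Set.range (V : Fin 3 → Zorn F)) →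
      a₃ ∈ Submodule.span F (Set.range (V : Fin 3 → Zorn F)) →
      a₄ ∈ Submodule.span F (Set.range (V : Fin 3 → Zorn F)) →
      Q a₁ a₂ a₃ a₄ = 0) ∧
    (∀ i j : Fin 3, Q (e₁ : Zorn F) e₂ (U i) (V j) = if i = j then (-1 : F) else 0) := by
  refine ⟨?_, ?_, ?_⟩
  · intro a₁ a₂ a₃ a₄ h1 h2 h3 h4
    have p1 := Zorn.mem_spanU h1
    have p2 := Zorn.mem_spanU h2
    have p3 := Zorn.mem_spanU h3
    have p4 := Zorn.mem_spanU h4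
    simp [Q, FqU_zero, p1, p2, p3, p4, FqU_zero p1 p2 p3 p4, FqU_zero p3 p2 p1 p4,
      FqU_zero p4 p2 p3 p1, FqU_zero p1 p4 p3 p2, FqU_zero p1 p3 p2 p4, FqU_zero p3 p4 p2 p1]
  · intro a₁ a₂ a₃ a₄ h1 h2 h3 h4
    have p1 := Zorn.mem_spanV h1
    have p2 := Zorn.mem_spanV h2
    have p3 := Zorn.mem_spanV h3
    have p4 := Zorn.mem_spanV h4
    simp [Q, FqV_zero p1 p2 p3 p4, FqV_zero p3 p2 p1 p4,
      FqV_zero p4 p2 p3 p1, FqV_zero p1 p4 p3 p2, FqV_zero p1 p3 p2 p4, FqV_zero p3 p4 p2 p1]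
  · have h48 : (48 : F) ≠ 0 := by
      have : (48 : F) = 2 ^ 4 * 3 := by norm_num
      rw [this]; exact mul_ne_zero (pow_ne_zero _ h2) h3
    have h128 : (128 : F) ≠ 0 := by
      have : (128 : F) = 2 ^ 7 := by norm_num
      rw [this]; exact pow_ne_zero _ h2
    have h12 : (12 : F) ≠ 0 := by
      have : (12 : F) = 2 ^ 2 * 3 := by norm_num
      rw [this]; exact mul_ne_zero (pow_ne_zero _ h2) h3
    intro i j
    fin_cases i <;> fin_cases j <;>
      simp only [Q, Fq, M, Zorn.t, Zorn.al_mul, Zorn.be_mul, Zorn.up_mul, Zorn.lo_mul,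
        Zorn.al_add, Zorn.be_add, Zorn.up_add, Zorn.lo_add, Zorn.al_sub, Zorn.be_sub,
        Zorn.up_sub, Zorn.lo_sub, Zorn.al_smul, Zorn.be_smul, Zorn.up_smul, Zorn.lo_smul,
        e₁, e₂, U, V, Zorn.al_mk, Zorn.be_mk, Zorn.up_mk, Zorn.lo_mk] <;>
      simp [dotProduct, Fin.sum_univ_three, cross_apply, Pi.single_apply] <;>
      ring_nf <;> field_simp <;>
      rw [neg_inj, div_eq_iff (show (6:F) ≠ 0 by rw [show (6:F) = 2 * 3 by norm_num]; exact mul_ne_zero h2 h3)] <;> norm_num
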